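/- The representation ϱ_{1,0} of D_∞ on ℂβ_r ⊕ ℂβ_t (r·β_r = -β_r, r·β_t = β_t + β_r, t·β_t = -β_t, t·β_r = β_r) has ℂβ_r as a subrepresentation on which r acts by -1 and t acts by 1, the quotient being the one-dimensional representation with r ↦ 1, t ↦ -1, and ϱ_{1,0} is indecomposable (not a direct sum of two one-dimensional subrepresentations). -/

import Mathlib

open DihedralGroup

theorem varrho_one_zero_indecomposable
    (βr βt : Fin 2 → ℂ) (hβr : βr = Pi.single 0 1) (hβt : βt = Pi.single 1 1)
    (ρ : Representation ℂ (DihedralGroup 0) (Fin 2 → ℂ))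
    (hrr : ρ (sr 0) βr = -βr) (hrt : ρ (sr 0) βt = βt + βr)
    (htt : ρ (sr 1) βt = -βt) (htr : ρ (sr 1) βr = βr) :
    -- ℂβ_r is a subrepresentation, on which r acts by -1 and t by 1
    (∀ (g : DihedralGroup 0), ∀ v ∈ Submodule.span ℂ {βr}, ρ g v ∈ Submodule.span ℂ {βr}) ∧
    ρ (sr 0) βr = -βr ∧ ρ (sr 1) βr = βr ∧
    -- on the quotient modulo ℂβ_r, r acts by 1 and t acts by -1
    ρ (sr 0) βt - βt ∈ Submodule.span ℂ {βr} ∧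
    ρ (sr 1) βt + βt ∈ Submodule.span ℂ {βr} ∧
    -- indecomposability
    ¬ ∃ p q : Submodule ℂ (Fin 2 → ℂ),
        (∀ (g : DihedralGroup 0), ∀ v ∈ p, ρ g v ∈ p) ∧
        (∀ (g : DihedralGroup 0), ∀ v ∈ q, ρ g v ∈ q) ∧
        Module.finrank ℂ p = 1 ∧ Module.finrank ℂ q = 1 ∧ IsCompl p q := by
  have hbr_ne : βr ≠ 0 := by
    rw [hβr]; intro h; have := congrFun h 0; simp at this
  -- D∞ is generated by sr 0 and sr 1
  have hclos : Subgroup.closure ({sr 0, sr 1} : Set (DihedralGroup 0)) = ⊤ := by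
    set H := Subgroup.closure ({sr 0, sr 1} : Set (DihedralGroup 0)) with hH
    have h0 : (sr 0 : DihedralGroup 0) ∈ H := Subgroup.subset_closure (by simp)
    have h1 : (sr 1 : DihedralGroup 0) ∈ H := Subgroup.subset_closure (by simp)
    have hr1 : (r 1 : DihedralGroup 0) ∈ H := by
      have : (sr 0 * sr 1 : DihedralGroup 0) = r 1 := by
        rw [sr_mul_sr]; norm_num
      exact this ▸ Subgroup.mul_mem _ h0 h1
    have hrm1 : (r (-1) : DihedralGroup 0) ∈ H := by
      have : (sr 1 * sr 0 : DihedralGroup 0) = r (-1) := by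
        rw [sr_mul_sr]; norm_num
      exact this ▸ Subgroup.mul_mem _ h1 h0
    have hrmem : ∀ i : ZMod 0, (r i : DihedralGroup 0) ∈ H := by
      have hint : ∀ j : ℤ, (r (j : ZMod 0) : DihedralGroup 0) ∈ H := by
        intro j
        induction j using Int.induction_on with
        | zero => have := one_mem H; rw [one_def] at this; exact this
        | succ k ih => exact (congrArg (· ∈ H) (r_mul_r (n := 0) _ _)).mp (mul_mem ih hr1)
        | pred k ih => exact (congrArg (· ∈ H) (r_mul_r (n := 0) _ _)).mp (mul_mem ih hrm1)
      intro i
      exact (ZMod.intCast_zmod_cast i) ▸ hint (ZMod.cast i)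
    rw [eq_top_iff]
    rintro (i | i) -
    · exact hrmem i
    · have : (sr 0 * r i : DihedralGroup 0) = sr i := by
        rw [sr_mul_r, zero_add]
      exact this ▸ Subgroup.mul_mem _ h0 (hrmem i)
  -- every group element sends βr to a multiple of βr
  have hgen : ∀ g : DihedralGroup 0, ∃ c : ℂ, ρ g βr = c • βr := by
    intro g
    have hg : g ∈ Subgroup.closure ({sr 0, sr 1} : Set (DihedralGroup 0)) := by
      rw [hclos]; trivial
    induction hg using Subgroup.closure_induction with
    | mem x hx =>
        rcases hx with h | h
        · exact ⟨-1, by rw [h, hrr, neg_one_smul]⟩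
        · exact ⟨1, by rw [h, htr, one_smul]⟩
    | one => exact ⟨1, by simp⟩
    | mul x y _ _ hx hy =>
        obtain ⟨c, hc⟩ := hx
        obtain ⟨d, hd⟩ := hy
        refine ⟨c * d, ?_⟩
        rw [map_mul]
        simp only [Module.End.mul_apply]
        rw [hd, map_smul, hc, smul_smul, mul_comm]
    | inv x _ hx =>
        obtain ⟨c, hc⟩ := hx
        have hβ : βr = c • ρ x⁻¹ βr := by
          have h2 : ρ x⁻¹ (ρ x βr) = βr := by
            rw [← Module.End.mul_apply, ← map_mul, inv_mul_cancel, map_one, Module.End.one_apply]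
          conv_lhs => rw [← h2, hc]
          exact map_smul _ c βr
        have hc0 : c ≠ 0 := by
          rintro rfl
          rw [zero_smul] at hβ
          exact hbr_ne hβ
        exact ⟨c⁻¹, ((inv_smul_eq_iff₀ hc0).mpr hβ).symm⟩
  refine ⟨?_, hrr, htr, ?_, ?_, ?_⟩
  · intro g v hv
    rw [Submodule.mem_span_singleton] at hv ⊢
    obtain ⟨a, rfl⟩ := hv
    obtain ⟨c, hc⟩ := hgen g
    exact ⟨a * c, by rw [map_smul, hc, smul_smul]⟩
  · rw [hrt]; simpa using Submodule.mem_span_singleton_self βr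
  · rw [htt]; simp
  · rintro ⟨p, q, hp, hq, hp1, hq1, hcompl⟩
    -- any 1-dim invariant subspace contains βr
    have key : ∀ s : Submodule ℂ (Fin 2 → ℂ),
        (∀ g : DihedralGroup 0, ∀ v ∈ s, ρ g v ∈ s) → Module.finrank ℂ s = 1 → βr ∈ s := by
      intro s hs hs1
      obtain ⟨⟨v, hvs⟩, hvne, hvspan⟩ := finrank_eq_one_iff'.mp hs1
      have hvne' : v ≠ 0 := fun h => hvne (Subtype.ext h)
      -- decompose v
      have hdec : v = v 0 • βr + v 1 • βt := by
        rw [hβr, hβt]; funext x; fin_cases x <;> simp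
      -- sr 1 and sr 0 act on v as scalars
      obtain ⟨μ, hμ⟩ : ∃ μ : ℂ, ρ (sr 1) v = μ • v := by
        have h1 : ρ (sr 1) v ∈ s := hs _ _ hvs
        obtain ⟨c, hc⟩ := hvspan ⟨_, h1⟩
        exact ⟨c, by simpa using congrArg Subtype.val hc.symm⟩
      obtain ⟨lam, hlam⟩ : ∃ lam : ℂ, ρ (sr 0) v = lam • v := by
        have h1 : ρ (sr 0) v ∈ s := hs _ _ hvs
        obtain ⟨c, hc⟩ := hvspan ⟨_, h1⟩
        exact ⟨c, by simpa using congrArg Subtype.val hc.symm⟩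
      have hρ1 : ρ (sr 1) v = v 0 • βr - v 1 • βt := by
        conv_lhs => rw [hdec]
        rw [map_add, map_smul, map_smul, htr, htt, smul_neg, sub_eq_add_neg]
      have hρ0 : ρ (sr 0) v = (v 1 - v 0) • βr + v 1 • βt := by
        conv_lhs => rw [hdec]
        rw [map_add, map_smul, map_smul, hrr, hrt, smul_neg]
        module
      -- evaluate components
      have e10 : v 0 = μ * v 0 := by
        have := congrFun (hρ1.symm.trans hμ) 0
        rw [hβr, hβt] at this
        simpa using this
      have e11 : -(v 1) = μ * v 1 := by
        have := congrFun (hρ1.symm.trans hμ) 1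
        rw [hβr, hβt] at this
        simpa using this
      have e00 : v 1 - v 0 = lam * v 0 := by
        have := congrFun (hρ0.symm.trans hlam) 0
        rw [hβr, hβt] at this
        simpa using this
      have e01 : v 1 = lam * v 1 := by
        have := congrFun (hρ0.symm.trans hlam) 1
        rw [hβr, hβt] at this
        simpa using this
      by_cases hv1 : v 1 = 0
      · -- v = v 0 • βr with v 0 ≠ 0, hence βr ∈ s
        have hveq : v = v 0 • βr := by
          conv_lhs => rw [hdec, hv1]
          simp
        have hv0 : v 0 ≠ 0 := by
          intro h
          exact hvne' (by rw [hveq, h, zero_smul])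
        have hb : βr = (v 0)⁻¹ • v := by
          calc βr = (v 0)⁻¹ • (v 0 • βr) := by
                rw [smul_smul, inv_mul_cancel₀ hv0, one_smul]
            _ = (v 0)⁻¹ • v := by rw [← hveq]
        rw [hb]
        exact s.smul_mem _ hvs
      · exfalso
        have hlam1 : lam = 1 := by
          have h2 : v 1 * (lam - 1) = 0 := by linear_combination -e01
          rcases mul_eq_zero.mp h2 with h | h
          · exact absurd h hv1
          · exact sub_eq_zero.mp h
        have hμm1 : μ = -1 := by
          have h2 : v 1 * (μ + 1) = 0 := by linear_combination -e11
          rcases mul_eq_zero.mp h2 with h | h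
          · exact absurd h hv1
          · exact eq_neg_of_add_eq_zero_left h
        have hv0 : v 0 = 0 := by
          rw [hμm1] at e10
          have h2 : v 0 * 2 = 0 := by linear_combination e10
          simpa using h2
        rw [hlam1, hv0, one_mul] at e00
        simp at e00
        exact hv1 e00
    have hβp : βr ∈ p := key p hp hp1
    have hβq : βr ∈ q := key q hq hq1
    have : βr ∈ p ⊓ q := ⟨hβp, hβq⟩
    rw [hcompl.inf_eq_bot] at this
    exact hbr_ne (by simpa using this)
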